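/- In the long-range setup, for every C¹ path γ:[0,1]→ℝⁿ whose image avoids the centres R_1,…,R_K, the Agmon lengths of γ with respect to the full potential U and with respect to the truncated potential U_sh differ by at most √(2·m·K·λ) times the Euclidean length of γ: |L_A^{U}(γ) − L_A^{U_sh}(γ)| ≤ √(2mKλ)·∫₀¹ ‖γ'(t)‖ dt. (This is the quantitative core of the statement that leading tunnelling trajectories for long-range multi-centre potentials are linear up to a term of order O(λ) as λ→0.) -/

import Mathlib

open MeasureTheory Filter

private lemma sqrt_sub_sqrt_le_aux {a b : ℝ} (h : b ≤ a) :
    Real.sqrt a - Real.sqrt b ≤ Real.sqrt (a - b) := by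
  rcases le_or_gt b 0 with hb | hb
  · rw [Real.sqrt_eq_zero'.mpr hb, sub_zero]
    exact Real.sqrt_le_sqrt (by linarith)
  · have h1 : a ≤ (Real.sqrt b + Real.sqrt (a - b)) ^ 2 := by
      nlinarith [Real.sq_sqrt hb.le, Real.sq_sqrt (sub_nonneg.2 h),
        Real.sqrt_nonneg b, Real.sqrt_nonneg (a - b),
        mul_nonneg (Real.sqrt_nonneg b) (Real.sqrt_nonneg (a - b))]
    have h2 := Real.sqrt_le_sqrt h1
    rw [Real.sqrt_sq (by positivity)] at h2
    linarith

private lemma abs_sqrt_sub_sqrt_le_aux (a b : ℝ) :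
    |Real.sqrt a - Real.sqrt b| ≤ Real.sqrt |a - b| := by
  rcases le_total b a with h | h
  · rw [abs_of_nonneg (sub_nonneg.2 (Real.sqrt_le_sqrt h)), abs_of_nonneg (sub_nonneg.2 h)]
    exact sqrt_sub_sqrt_le_aux h
  · rw [abs_sub_comm, abs_sub_comm a b,
      abs_of_nonneg (sub_nonneg.2 (Real.sqrt_le_sqrt h)), abs_of_nonneg (sub_nonneg.2 h)]
    exact sqrt_sub_sqrt_le_aux h

/-- The Agmon length of a `C¹` path `γ : [0,1] → ℝⁿ` for mass `m`, energy `E`,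
potential `W`:  `L_A^W(γ) = √(2m) ∫₀¹ (max (W(γ t) − E) 0)^{1/2} ‖γ'(t)‖ dt`. -/
noncomputable def agmonLength {n : ℕ} (m E : ℝ) (W : EuclideanSpace ℝ (Fin n) → ℝ)
    (γ : ℝ → EuclideanSpace ℝ (Fin n)) : ℝ :=
  Real.sqrt (2 * m) * ∫ t in (0:ℝ)..1, Real.sqrt (max (W (γ t) - E) 0) * ‖deriv γ t‖

/-- quantitative core of Theorem 2 of the paper.  Long-range setup in
`ℝ^{n+2}` with `K+1` centres `R j`, attractive singular long-range potentials `𝒱 j`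
(negative, strictly increasing on `(0,∞)`, `→ −∞` at `0⁺`, `→ 0` at `∞`), cut-off radii
`Δ j > 0`, truncations `V_sh^{(j)}`, full potential `U`, truncated potential `U_sh`, and
`λ = max_j |𝒱_j(Δ_j)|`.  For every `C¹` path `γ` whose image (on `[0,1]`) avoids the
centres, `|L_A^U(γ) − L_A^{U_sh}(γ)| ≤ √(2 m K λ) ∫₀¹ ‖γ'(t)‖ dt`. -/
theorem agmonLength_truncation_bound
    (n K : ℕ) (m E F : ℝ) (hm : 0 < m) (hF : 0 < F)
    (R : Fin (K + 1) → EuclideanSpace ℝ (Fin (n + 2)))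
    (𝒱 : Fin (K + 1) → ℝ → ℝ)
    (h𝒱neg : ∀ j, ∀ s : ℝ, 0 < s → 𝒱 j s < 0)
    (h𝒱mono : ∀ j, StrictMonoOn (𝒱 j) (Set.Ioi 0))
    (h𝒱sing : ∀ j, Tendsto (𝒱 j) (nhdsWithin 0 (Set.Ioi 0)) atBot)
    (h𝒱zero : ∀ j, Tendsto (𝒱 j) atTop (nhds 0))
    (Δ : Fin (K + 1) → ℝ) (hΔ : ∀ j, 0 < Δ j)
    (Vsh : Fin (K + 1) → ℝ → ℝ)
    (hVsh : ∀ j, ∀ s : ℝ, Vsh j s = if s < Δ j then 𝒱 j s else 0)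
    (U Ush : EuclideanSpace ℝ (Fin (n + 2)) → ℝ)
    (hU : ∀ x, U x = (∑ j, 𝒱 j ‖x - R j‖) + F * x (Fin.last (n + 1)))
    (hUsh : ∀ x, Ush x = (∑ j, Vsh j ‖x - R j‖) + F * x (Fin.last (n + 1)))
    (lam : ℝ) (hlam : lam = ⨆ j : Fin (K + 1), |𝒱 j (Δ j)|)
    (γ : ℝ → EuclideanSpace ℝ (Fin (n + 2))) (hγ : ContDiff ℝ 1 γ)
    (hγavoid : ∀ t ∈ Set.Icc (0 : ℝ) 1, ∀ j, γ t ≠ R j) :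
    |agmonLength m E U γ - agmonLength m E Ush γ| ≤
      Real.sqrt (2 * m * (K + 1 : ℝ) * lam) * ∫ t in (0:ℝ)..1, ‖deriv γ t‖ := by
  have hlamle : ∀ j, |𝒱 j (Δ j)| ≤ lam := by
    intro j; rw [hlam]
    exact le_ciSup (f := fun j : Fin (K+1) => |𝒱 j (Δ j)|) (Set.Finite.bddAbove (Set.finite_range _)) j
  have hlam0 : (0:ℝ) ≤ lam := le_trans (abs_nonneg _) (hlamle 0)
  -- pointwise bound on the potential difference
  have hdiff : ∀ t ∈ Set.Icc (0:ℝ) 1, |U (γ t) - Ush (γ t)| ≤ (K + 1 : ℝ) * lam := by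
    intro t ht
    rw [hU, hUsh]
    have heq : (∑ j, 𝒱 j ‖γ t - R j‖) + F * (γ t) (Fin.last (n + 1)) -
        ((∑ j, Vsh j ‖γ t - R j‖) + F * (γ t) (Fin.last (n + 1))) =
        ∑ j, (𝒱 j ‖γ t - R j‖ - Vsh j ‖γ t - R j‖) := by
      rw [Finset.sum_sub_distrib]; ring
    rw [heq]
    calc |∑ j, (𝒱 j ‖γ t - R j‖ - Vsh j ‖γ t - R j‖)|
        ≤ ∑ j, |𝒱 j ‖γ t - R j‖ - Vsh j ‖γ t - R j‖| := Finset.abs_sum_le_sum_abs _ _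
      _ ≤ ∑ _j : Fin (K + 1), lam := by
          refine Finset.sum_le_sum fun j _ => ?_
          have hs : (0:ℝ) < ‖γ t - R j‖ := by
            rw [norm_pos_iff]; exact sub_ne_zero.mpr (hγavoid t ht j)
          rw [hVsh]
          by_cases hcase : ‖γ t - R j‖ < Δ j
          · simp [hcase, hlam0]
          · rw [if_neg hcase, sub_zero]
            have h1 : 𝒱 j (Δ j) ≤ 𝒱 j ‖γ t - R j‖ :=
              (h𝒱mono j).monotoneOn (Set.mem_Ioi.mpr (hΔ j)) (Set.mem_Ioi.mpr hs)
                (not_lt.1 hcase)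
            have h2 : 𝒱 j ‖γ t - R j‖ < 0 := h𝒱neg j _ hs
            calc |𝒱 j ‖γ t - R j‖| = -(𝒱 j ‖γ t - R j‖) := abs_of_neg h2
              _ ≤ -(𝒱 j (Δ j)) := by linarith
              _ = |𝒱 j (Δ j)| := (abs_of_neg (h𝒱neg j (Δ j) (hΔ j))).symm
              _ ≤ lam := hlamle j
      _ = (K + 1 : ℝ) * lam := by
          rw [Finset.sum_const, Finset.card_univ, Fintype.card_fin, nsmul_eq_mul]
          push_cast; ring
  -- pointwise bound on the sqrt difference
  have hsq : ∀ t ∈ Set.Icc (0:ℝ) 1,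
      |Real.sqrt (max (U (γ t) - E) 0) - Real.sqrt (max (Ush (γ t) - E) 0)| ≤
        Real.sqrt ((K + 1 : ℝ) * lam) := by
    intro t ht
    refine le_trans (abs_sqrt_sub_sqrt_le_aux _ _) (Real.sqrt_le_sqrt ?_)
    refine le_trans (abs_max_sub_max_le_abs _ _ _) ?_
    rw [sub_sub_sub_cancel_right]
    exact hdiff t ht
  -- distances to the centres are bounded below on [0,1]
  have hcontγ : Continuous γ := hγ.continuous
  have hδex : ∀ j, ∃ δ : ℝ, 0 < δ ∧ ∀ t ∈ Set.Icc (0:ℝ) 1, δ ≤ ‖γ t - R j‖ := by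
    intro j
    obtain ⟨t0, ht0, hmin⟩ := isCompact_Icc.exists_isMinOn
      (Set.nonempty_Icc.mpr zero_le_one)
      (((hcontγ.sub continuous_const).norm).continuousOn :
        ContinuousOn (fun t => ‖γ t - R j‖) (Set.Icc 0 1))
    refine ⟨‖γ t0 - R j‖, ?_, fun t ht => hmin ht⟩
    rw [norm_pos_iff]; exact sub_ne_zero.mpr (hγavoid t0 ht0 j)
  choose δ hδpos hδle using hδex
  -- monotone (hence measurable) extensions of the radial potentials
  set W : Fin (K + 1) → ℝ → ℝ := fun j s => 𝒱 j (max s (δ j)) with hWdef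
  have hWmono : ∀ j, Monotone (W j) := by
    intro j a b hab
    exact (h𝒱mono j).monotoneOn
      (Set.mem_Ioi.mpr (lt_of_lt_of_le (hδpos j) (le_max_right _ _)))
      (Set.mem_Ioi.mpr (lt_of_lt_of_le (hδpos j) (le_max_right _ _)))
      (max_le_max hab le_rfl)
  have hVshmono : ∀ j, MonotoneOn (Vsh j) (Set.Ioi 0) := by
    intro j a ha b hb hab
    rw [hVsh, hVsh]
    by_cases h1 : a < Δ j
    · by_cases h2 : b < Δ j
      · rw [if_pos h1, if_pos h2]; exact (h𝒱mono j).monotoneOn ha hb hab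
      · rw [if_pos h1, if_neg h2]; exact (h𝒱neg j a ha).le
    · have h2 : ¬ b < Δ j := fun hb' => h1 (lt_of_le_of_lt hab hb')
      rw [if_neg h1, if_neg h2]
  set Wsh : Fin (K + 1) → ℝ → ℝ := fun j s => Vsh j (max s (δ j)) with hWshdef
  have hWshmono : ∀ j, Monotone (Wsh j) := by
    intro j a b hab
    exact (hVshmono j)
      (Set.mem_Ioi.mpr (lt_of_lt_of_le (hδpos j) (le_max_right _ _)))
      (Set.mem_Ioi.mpr (lt_of_lt_of_le (hδpos j) (le_max_right _ _)))
      (max_le_max hab le_rfl)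
  -- coordinate map is continuous
  have hcoord : Continuous (fun x : EuclideanSpace ℝ (Fin (n + 2)) => x (Fin.last (n + 1))) :=
    (EuclideanSpace.proj (Fin.last (n + 1)) :
      EuclideanSpace ℝ (Fin (n + 2)) →L[ℝ] ℝ).continuous
  -- measurable versions of U∘γ and Ush∘γ
  set G : ℝ → ℝ := fun t => (∑ j, W j ‖γ t - R j‖) + F * (γ t) (Fin.last (n + 1)) with hGdef
  set Gsh : ℝ → ℝ := fun t => (∑ j, Wsh j ‖γ t - R j‖) + F * (γ t) (Fin.last (n + 1))
    with hGshdef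
  have hGmeas : Measurable G := by
    refine Measurable.add ?_ (measurable_const.mul ((hcoord.comp hcontγ).measurable))
    exact Finset.measurable_sum _ fun j _ =>
      (hWmono j).measurable.comp ((hcontγ.sub continuous_const).norm.measurable)
  have hGshmeas : Measurable Gsh := by
    refine Measurable.add ?_ (measurable_const.mul ((hcoord.comp hcontγ).measurable))
    exact Finset.measurable_sum _ fun j _ =>
      (hWshmono j).measurable.comp ((hcontγ.sub continuous_const).norm.measurable)
  have hGeq : ∀ t ∈ Set.Icc (0:ℝ) 1, U (γ t) = G t := by
    intro t ht
    rw [hU, hGdef]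
    congr 1
    refine Finset.sum_congr rfl fun j _ => ?_
    simp only [hWdef]
    rw [max_eq_left (hδle j t ht)]
  have hGsheq : ∀ t ∈ Set.Icc (0:ℝ) 1, Ush (γ t) = Gsh t := by
    intro t ht
    rw [hUsh, hGshdef]
    congr 1
    refine Finset.sum_congr rfl fun j _ => ?_
    simp only [hWshdef]
    rw [max_eq_left (hδle j t ht)]
  -- uniform upper bound for the potentials on the path
  obtain ⟨t1, ht1, hmax⟩ := isCompact_Icc.exists_isMaxOn
    (Set.nonempty_Icc.mpr zero_le_one)
    (((continuous_const.mul (hcoord.comp hcontγ))).continuousOn :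
      ContinuousOn (fun t => F * (γ t) (Fin.last (n + 1))) (Set.Icc 0 1))
  set M : ℝ := F * (γ t1) (Fin.last (n + 1)) with hMdef
  have hnormpos : ∀ t ∈ Set.Icc (0:ℝ) 1, ∀ j, (0:ℝ) < ‖γ t - R j‖ := by
    intro t ht j
    rw [norm_pos_iff]; exact sub_ne_zero.mpr (hγavoid t ht j)
  have hUb : ∀ t ∈ Set.Icc (0:ℝ) 1, U (γ t) ≤ M := by
    intro t ht
    rw [hU]
    have h1 : (∑ j, 𝒱 j ‖γ t - R j‖) ≤ 0 :=
      Finset.sum_nonpos fun j _ => (h𝒱neg j _ (hnormpos t ht j)).le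
    have h2 : F * (γ t) (Fin.last (n + 1)) ≤ M := hmax ht
    linarith
  have hUshb : ∀ t ∈ Set.Icc (0:ℝ) 1, Ush (γ t) ≤ M := by
    intro t ht
    rw [hUsh]
    have h1 : (∑ j, Vsh j ‖γ t - R j‖) ≤ 0 := by
      refine Finset.sum_nonpos fun j _ => ?_
      rw [hVsh]
      split
      · exact (h𝒱neg j _ (hnormpos t ht j)).le
      · exact le_rfl
    have h2 : F * (γ t) (Fin.last (n + 1)) ≤ M := hmax ht
    linarith
  set B : ℝ := Real.sqrt (max (M - E) 0) with hBdef
  -- integrability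
  have hderiv : Continuous (deriv γ) := hγ.continuous_deriv le_rfl
  have hnormInt : IntervalIntegrable (fun t => ‖deriv γ t‖) volume 0 1 :=
    (hderiv.norm).intervalIntegrable 0 1
  have hmemIcc : ∀ t ∈ Set.uIoc (0:ℝ) 1, t ∈ Set.Icc (0:ℝ) 1 := by
    intro t ht
    rw [Set.uIoc_of_le (zero_le_one : (0:ℝ) ≤ 1)] at ht
    exact Set.Ioc_subset_Icc_self ht
  set f : ℝ → ℝ := fun t => Real.sqrt (max (U (γ t) - E) 0) * ‖deriv γ t‖ with hfdef
  set g : ℝ → ℝ := fun t => Real.sqrt (max (Ush (γ t) - E) 0) * ‖deriv γ t‖ with hgdef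
  have hfInt : IntervalIntegrable f volume 0 1 := by
    refine (hnormInt.const_mul B).mono_fun' ?_ ?_
    · refine AEStronglyMeasurable.congr
        (f := fun t => Real.sqrt (max (G t - E) 0) * ‖deriv γ t‖) ?_ ?_
      · exact ((Real.continuous_sqrt.measurable.comp
          (((hGmeas.sub measurable_const).max measurable_const))).mul
          (hderiv.norm.measurable)).aestronglyMeasurable
      · refine (ae_restrict_iff' measurableSet_uIoc).mpr (ae_of_all _ fun t ht => ?_)
        rw [hfdef]; simp only; rw [hGeq t (hmemIcc t ht)]
    · refine (ae_restrict_iff' measurableSet_uIoc).mpr (ae_of_all _ fun t ht => ?_)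
      have ht' := hmemIcc t ht
      have h1 : Real.sqrt (max (U (γ t) - E) 0) ≤ B := by
        rw [hBdef]
        exact Real.sqrt_le_sqrt (max_le_max (by linarith [hUb t ht']) le_rfl)
      have h0 : (0:ℝ) ≤ f t := mul_nonneg (Real.sqrt_nonneg _) (norm_nonneg _)
      show ‖f t‖ ≤ B * ‖deriv γ t‖
      rw [Real.norm_eq_abs, abs_of_nonneg h0]
      exact mul_le_mul_of_nonneg_right h1 (norm_nonneg _)
  have hgInt : IntervalIntegrable g volume 0 1 := by
    refine (hnormInt.const_mul B).mono_fun' ?_ ?_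
    · refine AEStronglyMeasurable.congr
        (f := fun t => Real.sqrt (max (Gsh t - E) 0) * ‖deriv γ t‖) ?_ ?_
      · exact ((Real.continuous_sqrt.measurable.comp
          (((hGshmeas.sub measurable_const).max measurable_const))).mul
          (hderiv.norm.measurable)).aestronglyMeasurable
      · refine (ae_restrict_iff' measurableSet_uIoc).mpr (ae_of_all _ fun t ht => ?_)
        rw [hgdef]; simp only; rw [hGsheq t (hmemIcc t ht)]
    · refine (ae_restrict_iff' measurableSet_uIoc).mpr (ae_of_all _ fun t ht => ?_)
      have ht' := hmemIcc t ht
      have h1 : Real.sqrt (max (Ush (γ t) - E) 0) ≤ B := by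
        rw [hBdef]
        exact Real.sqrt_le_sqrt (max_le_max (by linarith [hUshb t ht']) le_rfl)
      have h0 : (0:ℝ) ≤ g t := mul_nonneg (Real.sqrt_nonneg _) (norm_nonneg _)
      show ‖g t‖ ≤ B * ‖deriv γ t‖
      rw [Real.norm_eq_abs, abs_of_nonneg h0]
      exact mul_le_mul_of_nonneg_right h1 (norm_nonneg _)
  -- the key integral estimate
  set C : ℝ := Real.sqrt ((K + 1 : ℝ) * lam) with hCdef
  have hIk : (0:ℝ) ≤ ∫ t in (0:ℝ)..1, ‖deriv γ t‖ :=
    intervalIntegral.integral_nonneg zero_le_one fun t _ => norm_nonneg _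
  have key : |(∫ t in (0:ℝ)..1, f t) - ∫ t in (0:ℝ)..1, g t| ≤
      C * ∫ t in (0:ℝ)..1, ‖deriv γ t‖ := by
    rw [← intervalIntegral.integral_sub hfInt hgInt]
    have hbd : ∀ᵐ t ∂(volume.restrict (Set.uIoc (0:ℝ) 1)), ‖f t - g t‖ ≤ C * ‖deriv γ t‖ := by
      refine (ae_restrict_iff' measurableSet_uIoc).mpr (ae_of_all _ fun t ht => ?_)
      have ht' := hmemIcc t ht
      have : f t - g t =
          (Real.sqrt (max (U (γ t) - E) 0) - Real.sqrt (max (Ush (γ t) - E) 0)) *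
            ‖deriv γ t‖ := by rw [hfdef, hgdef]; ring
      rw [Real.norm_eq_abs, this, abs_mul, abs_of_nonneg (norm_nonneg _)]
      exact mul_le_mul_of_nonneg_right (hsq t ht') (norm_nonneg _)
    have h1 : ‖∫ t in (0:ℝ)..1, (f t - g t)‖ ≤ |∫ t in (0:ℝ)..1, C * ‖deriv γ t‖| :=
      intervalIntegral.norm_integral_le_abs_of_norm_le hbd (hnormInt.const_mul C)
    rw [Real.norm_eq_abs] at h1
    refine h1.trans ?_
    rw [intervalIntegral.integral_const_mul,
      abs_of_nonneg (mul_nonneg (Real.sqrt_nonneg _) hIk)]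
  -- conclusion
  have h2m : (0:ℝ) ≤ 2 * m := by linarith
  unfold agmonLength
  calc |Real.sqrt (2 * m) * (∫ t in (0:ℝ)..1, f t) -
        Real.sqrt (2 * m) * ∫ t in (0:ℝ)..1, g t|
      = Real.sqrt (2 * m) * |(∫ t in (0:ℝ)..1, f t) - ∫ t in (0:ℝ)..1, g t| := by
        rw [← mul_sub, abs_mul, abs_of_nonneg (Real.sqrt_nonneg _)]
    _ ≤ Real.sqrt (2 * m) * (C * ∫ t in (0:ℝ)..1, ‖deriv γ t‖) :=
        mul_le_mul_of_nonneg_left key (Real.sqrt_nonneg _)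
    _ = Real.sqrt (2 * m * (K + 1 : ℝ) * lam) * ∫ t in (0:ℝ)..1, ‖deriv γ t‖ := by
        rw [hCdef, ← mul_assoc, ← Real.sqrt_mul h2m]
        congr 2
        ring
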